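/- Let P ⊆ ℝ^d be a convex set with recession cone C, and let x ∈ P. If x does not lie in the relative interior of any bounded face of P, i.e., there exists c ∈ C \ {0} and ε > 0 with x − εc ∈ P, then x is not a minimizer over P of any linear functional u whose minimizer set over P is bounded. Conversely, if x − c ∉ P for all c ∈ C \ {0}, and P is a polyhedron, then x lies in a bounded face of P. -/

import Mathlib

/-- Two claims about bounded faces of a convex set `P` with recession cone `C`:
(1) if `x − εc ∈ P` for some nonzero recession direction `c` and `ε > 0`, then `x`
is not a minimizer over `P` of any linear functional with bounded minimizer set;
(2) conversely, if `P` is a polyhedron and `x − c ∉ P` for all nonzero `c ∈ C`,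
then `x` lies in a bounded face of `P`. -/
theorem bounded_face_recession (d : ℕ) (P C : Set (EuclideanSpace ℝ (Fin d)))
    (hPconv : Convex ℝ P)
    (hC : C = {c | ∀ x ∈ P, ∀ l : ℝ, 0 ≤ l → x + l • c ∈ P})
    (x : EuclideanSpace ℝ (Fin d)) (hx : x ∈ P) :
    ((∃ c ∈ C, c ≠ 0 ∧ ∃ ε > (0:ℝ), x - ε • c ∈ P) →
      ∀ u : EuclideanSpace ℝ (Fin d),
        Bornology.IsBounded {z ∈ P | ∀ y ∈ P, inner ℝ u z ≤ (inner ℝ u y : ℝ)} →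
        x ∉ {z ∈ P | ∀ y ∈ P, inner ℝ u z ≤ (inner ℝ u y : ℝ)}) ∧
    (((∀ c ∈ C, c ≠ 0 → x - c ∉ P) ∧
        ∃ s : Finset (EuclideanSpace ℝ (Fin d) × ℝ),
          P = {z | ∀ p ∈ s, inner ℝ p.1 z ≤ (p.2 : ℝ)}) →
      ∃ u : EuclideanSpace ℝ (Fin d),
        x ∈ {z ∈ P | ∀ y ∈ P, inner ℝ u z ≤ (inner ℝ u y : ℝ)} ∧
        Bornology.IsBounded {z ∈ P | ∀ y ∈ P, inner ℝ u z ≤ (inner ℝ u y : ℝ)}) := by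
  subst hC
  constructor
  · -- Part 1
    rintro ⟨c, hcC, hc0, ε, hε, hxc⟩ u hb ⟨hxP, hmin⟩
    have h2 : (0:ℝ) ≤ inner ℝ u c := by
      have := hmin _ (hcC x hxP 1 zero_le_one)
      simp only [inner_add_right, inner_smul_right, one_mul] at this
      linarith
    have h3 : inner ℝ u x ≤ inner ℝ u x - ε * inner ℝ u c := by
      have := hmin _ hxc
      simpa [inner_sub_right, inner_smul_right] using this
    have huc0 : inner ℝ u c = (0:ℝ) := by nlinarith
    obtain ⟨r, hr⟩ := (Metric.isBounded_iff_subset_closedBall x).1 hb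
    have hcpos : 0 < ‖c‖ := norm_pos_iff.2 hc0
    set l : ℝ := (|r| + 1) / ‖c‖ with hl
    have hl0 : 0 ≤ l := by positivity
    have hmem : x + l • c ∈ {z ∈ P | ∀ y ∈ P, inner ℝ u z ≤ (inner ℝ u y : ℝ)} := by
      refine ⟨hcC x hxP l hl0, fun y hy => ?_⟩
      have := hmin y hy
      simp only [inner_add_right, inner_smul_right, huc0, mul_zero, add_zero]
      linarith
    have hball := hr hmem
    simp only [Metric.mem_closedBall, dist_eq_norm, add_sub_cancel_left] at hball
    rw [norm_smul, Real.norm_eq_abs, abs_of_nonneg hl0, hl, div_mul_cancel₀ _ hcpos.ne'] at hball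
    have h4 := abs_nonneg r
    have h5 := le_abs_self r
    linarith
  · -- Part 2
    rintro ⟨hnoc, s, hP⟩
    classical
    set I : Finset (EuclideanSpace ℝ (Fin d) × ℝ) :=
      s.filter (fun p => (inner ℝ p.1 x : ℝ) = p.2) with hIdef
    set u : EuclideanSpace ℝ (Fin d) := -∑ p ∈ I, p.1 with hu
    have hinner : ∀ z : EuclideanSpace ℝ (Fin d),
        (inner ℝ u z : ℝ) = -∑ p ∈ I, (inner ℝ p.1 z : ℝ) := by
      intro z
      simp [hu, inner_neg_left, sum_inner]
    have hxval : ∀ p ∈ I, (inner ℝ p.1 x : ℝ) = p.2 := by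
      intro p hp; exact (Finset.mem_filter.1 hp).2
    have hmin : ∀ y ∈ P, (inner ℝ u x : ℝ) ≤ inner ℝ u y := by
      intro y hy
      rw [hinner, hinner, neg_le_neg_iff]
      refine Finset.sum_le_sum fun p hp => ?_
      have := (hP ▸ hy) p (Finset.mem_filter.1 hp).1
      rw [hxval p hp]; exact this
    refine ⟨u, ⟨hx, hmin⟩, ?_⟩
    have hFtight : ∀ z ∈ P, ((∀ y ∈ P, (inner ℝ u z : ℝ) ≤ inner ℝ u y)) →
        ∀ p ∈ I, (inner ℝ p.1 z : ℝ) = p.2 := by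
      intro z hz hzmin p hp
      have hle : ∀ q ∈ I, (inner ℝ q.1 z : ℝ) ≤ q.2 := fun q hq =>
        (hP ▸ hz) q (Finset.mem_filter.1 hq).1
      have hsum : ∑ q ∈ I, (q.2 : ℝ) ≤ ∑ q ∈ I, (inner ℝ q.1 z : ℝ) := by
        have hzx := hzmin x hx
        rw [hinner, hinner, neg_le_neg_iff] at hzx
        calc ∑ q ∈ I, (q.2 : ℝ) = ∑ q ∈ I, (inner ℝ q.1 x : ℝ) :=
              (Finset.sum_congr rfl fun q hq => (hxval q hq).symm)
          _ ≤ _ := hzx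
      exact ((Finset.sum_eq_sum_iff_of_le hle).1
        (le_antisymm (Finset.sum_le_sum hle) hsum)) p hp
    by_contra hub
    have hseq : ∀ n : ℕ, ∃ z, (z ∈ P ∧ ∀ y ∈ P, (inner ℝ u z : ℝ) ≤ inner ℝ u y) ∧
        (n:ℝ) < ‖z - x‖ := by
      intro n
      by_contra h
      push_neg at h
      exact hub ((Metric.isBounded_iff_subset_closedBall x).2 ⟨n, fun z hz => by
        simp only [Metric.mem_closedBall, dist_eq_norm]
        exact h z ⟨hz.1, hz.2⟩⟩)
    choose z hzF hzn using hseq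
    have hznorm : ∀ n : ℕ, (0:ℝ) < ‖z n - x‖ := fun n =>
      lt_of_le_of_lt (Nat.cast_nonneg n) (hzn n)
    set w : ℕ → EuclideanSpace ℝ (Fin d) := fun n => ‖z n - x‖⁻¹ • (z n - x) with hw
    have hwmem : ∀ n, w n ∈ Metric.sphere (0 : EuclideanSpace ℝ (Fin d)) 1 := by
      intro n
      simp [hw, norm_smul, abs_of_pos (inv_pos.2 (hznorm n)),
        inv_mul_cancel₀ (hznorm n).ne']
    obtain ⟨c, hcs, φ, hφ, hφt⟩ :=
      (isCompact_sphere (0 : EuclideanSpace ℝ (Fin d)) 1).tendsto_subseq hwmem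
    have hc0 : c ≠ 0 := by
      intro h
      rw [h] at hcs
      simp at hcs
    have hwn : ∀ (p : EuclideanSpace ℝ (Fin d) × ℝ) (n : ℕ),
        (inner ℝ p.1 (w n) : ℝ) = ((inner ℝ p.1 (z n) : ℝ) - inner ℝ p.1 x) * ‖z n - x‖⁻¹ := by
      intro p n
      simp [hw, inner_smul_right, inner_sub_right]
      ring
    have hnormtend : Filter.Tendsto (fun n => ‖z (φ n) - x‖) Filter.atTop Filter.atTop := by
      apply Filter.tendsto_atTop_mono (fun n => (le_of_lt (hzn (φ n))))
      exact Filter.tendsto_atTop_mono (fun n => Nat.cast_le.2 (hφ.le_apply))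
        tendsto_natCast_atTop_atTop
    have hinvtend : Filter.Tendsto (fun n => ‖z (φ n) - x‖⁻¹) Filter.atTop (nhds 0) :=
      tendsto_inv_atTop_zero.comp hnormtend
    have hinnertend : ∀ p : EuclideanSpace ℝ (Fin d) × ℝ,
        Filter.Tendsto (fun n => (inner ℝ p.1 (w (φ n)) : ℝ)) Filter.atTop
          (nhds (inner ℝ p.1 c)) := fun p =>
      Filter.Tendsto.inner tendsto_const_nhds hφt
    have hcle : ∀ p ∈ s, (inner ℝ p.1 c : ℝ) ≤ 0 := by
      intro p hp
      have hlim0 : Filter.Tendsto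
          (fun n => ((p.2 : ℝ) - inner ℝ p.1 x) * ‖z (φ n) - x‖⁻¹) Filter.atTop (nhds 0) := by
        simpa using hinvtend.const_mul ((p.2 : ℝ) - inner ℝ p.1 x)
      refine le_of_tendsto_of_tendsto' (hinnertend p) hlim0 fun n => ?_
      rw [hwn p (φ n)]
      have hzP : (inner ℝ p.1 (z (φ n)) : ℝ) ≤ p.2 := (hP ▸ (hzF (φ n)).1) p hp
      have := inv_nonneg.2 (norm_nonneg (z (φ n) - x))
      apply mul_le_mul_of_nonneg_right (by linarith) this
    have hceq : ∀ p ∈ I, (inner ℝ p.1 c : ℝ) = 0 := by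
      intro p hp
      have hz0 : ∀ n, (inner ℝ p.1 (w (φ n)) : ℝ) = 0 := by
        intro n
        rw [hwn, hFtight (z (φ n)) (hzF (φ n)).1 (hzF (φ n)).2 p hp, hxval p hp]
        ring
      exact (tendsto_nhds_unique (((hinnertend p).congr hz0 : Filter.Tendsto
        (fun _ => (0:ℝ)) Filter.atTop (nhds (inner ℝ p.1 c)))) tendsto_const_nhds)
    have hcC : ∀ y ∈ P, ∀ l : ℝ, 0 ≤ l → y + l • c ∈ P := by
      intro y hy l hl
      rw [hP] at hy ⊢
      intro p hp
      have h1 := hy p hp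
      have h2 := hcle p hp
      simp only [Set.mem_setOf_eq, inner_add_right, inner_smul_right]
      nlinarith
    set g : EuclideanSpace ℝ (Fin d) × ℝ → ℝ := fun p =>
      if (inner ℝ p.1 c : ℝ) < 0 then ((p.2 : ℝ) - inner ℝ p.1 x) / (-(inner ℝ p.1 c)) else 1
      with hg
    set ε : ℝ := (insert ((0 : EuclideanSpace ℝ (Fin d)), (1:ℝ)) s).inf'
      (Finset.insert_nonempty _ _) g with hε
    have hstrict : ∀ p ∈ s, (inner ℝ p.1 c : ℝ) < 0 → (inner ℝ p.1 x : ℝ) < p.2 := by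
      intro p hp hpc
      rcases lt_or_eq_of_le ((hP ▸ hx) p hp) with h | h
      · exact h
      · exact absurd (hceq p (Finset.mem_filter.2 ⟨hp, h⟩)) (ne_of_lt hpc)
    have hεpos : 0 < ε := by
      rw [hε, Finset.lt_inf'_iff]
      intro p hp
      rcases Finset.mem_insert.1 hp with h | h
      · simp [hg, h]
      · simp only [hg]
        split_ifs with hpc
        · have := hstrict p h hpc
          apply div_pos (by linarith) (by linarith)
        · norm_num
    have hεle : ∀ p ∈ s, ε ≤ g p := fun p hp =>
      Finset.inf'_le _ (Finset.mem_insert_of_mem hp)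
    have hεcC : ε • c ∈ {c | ∀ y ∈ P, ∀ l : ℝ, 0 ≤ l → y + l • c ∈ P} := by
      intro y hy l hl
      rw [smul_smul]
      exact hcC y hy (l * ε) (mul_nonneg hl hεpos.le)
    refine hnoc (ε • c) hεcC (smul_ne_zero hεpos.ne' hc0) ?_
    rw [hP]
    intro p hp
    simp only [Set.mem_setOf_eq, inner_sub_right, inner_smul_right]
    by_cases hpc : (inner ℝ p.1 c : ℝ) < 0
    · have h1 := hεle p hp
      simp only [hg, if_pos hpc] at h1
      have h2 : 0 < -(inner ℝ p.1 c : ℝ) := by linarith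
      rw [le_div_iff₀ h2] at h1
      have := hstrict p hp hpc
      nlinarith
    · push_neg at hpc
      have h1 := (hP ▸ hx) p hp
      nlinarith [mul_nonneg hεpos.le hpc]
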